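/- Let h ∈ H_{I,n} and suppose h(i) = i for some i ∈ I. Let I' = {i' ∈ I : i' < i} and h' = h|_{I'∪{i}} ∈ H_{I',i}, and let I'' = {i''−i : i'' ∈ I, i'' > i} and h'' ∈ H_{I'',n−i} be defined by h''(i''−i) = h(i'')−i for i'' ∈ I with i'' > i (and h''(n−i) = n−i). Then for every N ≥ 1, csf_q^N(h) = csf_q^N(h') · csf_q^N(h''), a product of polynomials in ℤ[q][x_1,…,x_N]. (This is the chromatic-quasisymmetric form, via the paper's generalized Shareshian–Wachs theorem, of Proposition 34: the Poincaré polynomial of a reducible generalized Hessenberg variety factors.) -/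

import Mathlib

namespace GenHess

open scoped Classical

noncomputable section

/-- The vertex set `I ∪ {n}` of the weighted graph of a generalized Hessenberg function. -/
def verts (n : ℕ) (I : Finset ℕ) : Finset ℕ := insert n I

/-- `h : I ∪ {n} → I ∪ {n}` is a generalized Hessenberg function for `(I, n)`,
with `I ⊆ {1, …, n-1}`, `h i ≥ i`, and `h` weakly increasing on `I ∪ {n}`. -/
def IsGenHess (n : ℕ) (I : Finset ℕ) (h : ℕ → ℕ) : Prop :=
  (∀ i ∈ I, 1 ≤ i ∧ i ≤ n - 1) ∧
  (∀ i ∈ verts n I, h i ∈ verts n I) ∧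
  (∀ i ∈ verts n I, i ≤ h i) ∧
  (∀ i ∈ verts n I, ∀ j ∈ verts n I, i ≤ j → h i ≤ h j)

/-- The weight `w_h(i_k) = i_k - i_{k-1}` of a vertex: `v` minus the largest vertex
below `v` (or `0` if there is none). -/
def wt (n : ℕ) (I : Finset ℕ) (v : ℕ) : ℕ :=
  v - ((verts n I).filter (fun u => u < v)).sup id

/-- A proper coloring of the weighted graph `(Γ_h, w_h)` with colors in `[N]`:
each vertex `v` gets a set of colors of size `w_h(v)`, and adjacent vertices get
disjoint color sets (there is an edge `{i,j}` whenever `i < j ≤ h i`). -/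
def IsProper {N : ℕ} (n : ℕ) (I : Finset ℕ) (h : ℕ → ℕ)
    (γ : {x // x ∈ verts n I} → Finset (Fin N)) : Prop :=
  (∀ v : {x // x ∈ verts n I}, (γ v).card = wt n I v.val) ∧
  ∀ v u : {x // x ∈ verts n I}, v.val < u.val → u.val ≤ h v.val → Disjoint (γ v) (γ u)

/-- The ascent statistic `asc_h(γ) = Σ_{edges i<j} #{(a,b) ∈ γ(i)×γ(j) : a < b}`. -/
def asc {N : ℕ} (n : ℕ) (I : Finset ℕ) (h : ℕ → ℕ)
    (γ : {x // x ∈ verts n I} → Finset (Fin N)) : ℕ :=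
  ∑ v : {x // x ∈ verts n I}, ∑ u : {x // x ∈ verts n I},
    if v.val < u.val ∧ u.val ≤ h v.val then
      ((γ v ×ˢ γ u).filter fun ab => ab.1 < ab.2).card
    else 0

/-- The truncated chromatic quasisymmetric function `csf_q^N(h)`, as an element of
`ℤ[x_1,…,x_N][q]` (the outer `Polynomial.X` is `q`). -/
def csf (n : ℕ) (I : Finset ℕ) (h : ℕ → ℕ) (N : ℕ) :
    Polynomial (MvPolynomial (Fin N) ℤ) :=
  ∑ γ ∈ Finset.univ.filter
      (fun γ : {x // x ∈ verts n I} → Finset (Fin N) => IsProper n I h γ),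
    Polynomial.C (∏ v : {x // x ∈ verts n I}, ∏ a ∈ γ v, MvPolynomial.X a) *
      Polynomial.X ^ asc n I h γ

/-- The `q`-integer `[m]_q = 1 + q + ⋯ + q^{m-1}`. -/
def qNum (R : Type) [CommRing R] (m : ℕ) : Polynomial R :=
  ∑ i ∈ Finset.range m, Polynomial.X ^ i

/-- The `q`-factorial `[m]_q!`. -/
def qFact (R : Type) [CommRing R] : ℕ → Polynomial R
  | 0 => 1
  | m + 1 => qNum R (m + 1) * qFact R m

/-- The elementary symmetric polynomial `e_m(x_1,…,x_N)`, viewed as a constant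
polynomial in `q`. -/
def esym (N m : ℕ) : Polynomial (MvPolynomial (Fin N) ℤ) :=
  Polynomial.C (MvPolynomial.esymm (Fin N) ℤ m)

end

end GenHess

open GenHess

namespace GenHessAux

open GenHess
open scoped Classical

lemma mem_verts_iff {x m : ℕ} {J : Finset ℕ} : x ∈ verts m J ↔ x = m ∨ x ∈ J :=
  Finset.mem_insert

variable {n i : ℕ} {I : Finset ℕ}

lemma mem_verts1 (hii : i ∈ I) (hin : i < n) {x : ℕ} :
    x ∈ verts i (I.filter (fun y => y < i)) ↔ x ∈ verts n I ∧ x ≤ i := by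
  simp only [mem_verts_iff, Finset.mem_filter]
  constructor
  · rintro (rfl | ⟨hx, hxi⟩)
    · exact ⟨Or.inr hii, le_rfl⟩
    · exact ⟨Or.inr hx, hxi.le⟩
  · rintro ⟨(rfl | hx), hxi⟩
    · omega
    · rcases eq_or_lt_of_le hxi with rfl | hlt
      · exact Or.inl rfl
      · exact Or.inr ⟨hx, hlt⟩

lemma mem_verts2 (hin : i < n) {x : ℕ} :
    x ∈ verts (n - i) ((I.filter (fun y => i < y)).image (fun y => y - i)) ↔
      1 ≤ x ∧ x + i ∈ verts n I := by
  simp only [mem_verts_iff, Finset.mem_image, Finset.mem_filter]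
  constructor
  · rintro (rfl | ⟨y, ⟨hy, hiy⟩, rfl⟩)
    · exact ⟨by omega, Or.inl (by omega)⟩
    · refine ⟨by omega, Or.inr ?_⟩
      have : y - i + i = y := by omega
      rw [this]; exact hy
  · rintro ⟨h1x, (hxn | hxI)⟩
    · exact Or.inl (by omega)
    · exact Or.inr ⟨x + i, ⟨hxI, by omega⟩, by omega⟩

/-- The equivalence between the disjoint union of the two small vertex sets and the
big vertex set. -/
def vequiv (hii : i ∈ I) (hin : i < n) :
    ({x // x ∈ verts i (I.filter (fun y => y < i))} ⊕
        {x // x ∈ verts (n - i) ((I.filter (fun y => i < y)).image (fun y => y - i))}) ≃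
      {x // x ∈ verts n I} where
  toFun s := Sum.elim
      (fun v => ⟨v.1, ((mem_verts1 hii hin).mp v.2).1⟩)
      (fun v => ⟨v.1 + i, ((mem_verts2 hin).mp v.2).2⟩) s
  invFun v :=
    if hv : v.1 ≤ i then Sum.inl ⟨v.1, (mem_verts1 hii hin).mpr ⟨v.2, hv⟩⟩
    else Sum.inr ⟨v.1 - i, (mem_verts2 hin).mpr
      ⟨by omega, by rw [Nat.sub_add_cancel (by omega)]; exact v.2⟩⟩
  left_inv s := by
    rcases s with v | v
    · simp only [Sum.elim_inl]
      exact dif_pos ((mem_verts1 hii hin).mp v.2).2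
    · have h1 : 1 ≤ v.1 := ((mem_verts2 hin).mp v.2).1
      simp only [Sum.elim_inr]
      have hc' : ¬ ((v : ℕ) + i ≤ i) := by omega
      exact (dif_neg hc').trans
        (congrArg Sum.inr (Subtype.ext (Nat.add_sub_cancel (n := (v : ℕ)) (m := i))))
  right_inv v := by
    by_cases hv : v.1 ≤ i
    · simp only [dif_pos hv, Sum.elim_inl]
    · simp only [dif_neg hv, Sum.elim_inr]
      exact Subtype.ext (by simp; omega)

@[simp] lemma vequiv_inl_val (hii : i ∈ I) (hin : i < n) (v) :
    ((vequiv (I := I) hii hin) (Sum.inl v)).1 = v.1 := rfl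

@[simp] lemma vequiv_inr_val (hii : i ∈ I) (hin : i < n) (v) :
    ((vequiv (I := I) hii hin) (Sum.inr v)).1 = v.1 + i := rfl

/-- Glue a pair of colorings into a coloring of the big graph. -/
def glue {N : ℕ} (hii : i ∈ I) (hin : i < n)
    (γ1 : {x // x ∈ verts i (I.filter (fun y => y < i))} → Finset (Fin N))
    (γ2 : {x // x ∈ verts (n - i) ((I.filter (fun y => i < y)).image (fun y => y - i))} →
      Finset (Fin N)) :
    {x // x ∈ verts n I} → Finset (Fin N) :=
  fun v => Sum.elim γ1 γ2 ((vequiv hii hin).symm v)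

@[simp] lemma glue_inl {N : ℕ} (hii : i ∈ I) (hin : i < n) (γ1) (γ2) (v) :
    glue (N := N) hii hin γ1 γ2 ((vequiv hii hin) (Sum.inl v)) = γ1 v := by
  simp [glue]

@[simp] lemma glue_inr {N : ℕ} (hii : i ∈ I) (hin : i < n) (γ1) (γ2) (v) :
    glue (N := N) hii hin γ1 γ2 ((vequiv hii hin) (Sum.inr v)) = γ2 v := by
  simp [glue]

def res1 {N : ℕ} (hii : i ∈ I) (hin : i < n)
    (γ : {x // x ∈ verts n I} → Finset (Fin N)) :
    {x // x ∈ verts i (I.filter (fun y => y < i))} → Finset (Fin N) :=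
  fun v => γ ((vequiv hii hin) (Sum.inl v))

def res2 {N : ℕ} (hii : i ∈ I) (hin : i < n)
    (γ : {x // x ∈ verts n I} → Finset (Fin N)) :
    {x // x ∈ verts (n - i) ((I.filter (fun y => i < y)).image (fun y => y - i))} →
      Finset (Fin N) :=
  fun v => γ ((vequiv hii hin) (Sum.inr v))

lemma glue_res {N : ℕ} (hii : i ∈ I) (hin : i < n)
    (γ : {x // x ∈ verts n I} → Finset (Fin N)) :
    glue hii hin (res1 hii hin γ) (res2 hii hin γ) = γ := by
  funext v
  obtain ⟨s, rfl⟩ := (vequiv hii hin).surjective v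
  rcases s with v | v
  · rw [glue_inl]; rfl
  · rw [glue_inr]; rfl

lemma res1_glue {N : ℕ} (hii : i ∈ I) (hin : i < n) (γ1) (γ2) :
    res1 (N := N) hii hin (glue hii hin γ1 γ2) = γ1 := by
  funext v; rw [res1, glue_inl]

lemma res2_glue {N : ℕ} (hii : i ∈ I) (hin : i < n) (γ1) (γ2) :
    res2 (N := N) hii hin (glue hii hin γ1 γ2) = γ2 := by
  funext v; rw [res2, glue_inr]

/-- weights agree on the left part -/
lemma wt_left (hii : i ∈ I) (hin : i < n) {v : ℕ} (hvi : v ≤ i) :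
    wt n I v = wt i (I.filter (fun y => y < i)) v := by
  unfold wt
  have : (verts n I).filter (fun u => u < v) =
      (verts i (I.filter (fun y => y < i))).filter (fun u => u < v) := by
    ext u
    simp only [Finset.mem_filter, mem_verts1 hii hin]
    constructor
    · rintro ⟨h1, h2⟩; exact ⟨⟨h1, by omega⟩, h2⟩
    · rintro ⟨⟨h1, _⟩, h2⟩; exact ⟨h1, h2⟩
  rw [this]

/-- weights agree on the right part -/
lemma wt_right (hii : i ∈ I) (hin : i < n) {v : ℕ}
    (hv2 : v ∈ verts (n - i) ((I.filter (fun y => i < y)).image (fun y => y - i))) :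
    wt n I (v + i) = wt (n - i) ((I.filter (fun y => i < y)).image (fun y => y - i)) v := by
  obtain ⟨h1v, hvmem⟩ := (mem_verts2 hin).mp hv2
  unfold wt
  by_cases hS : ((verts (n - i) ((I.filter (fun y => i < y)).image (fun y => y - i))).filter
      (fun u => u < v)).Nonempty
  · obtain ⟨m, hm, hmax⟩ := Finset.exists_max_image _ id hS
    obtain ⟨hmV, hmv⟩ := Finset.mem_filter.mp hm
    obtain ⟨h1m, hmmem⟩ := (mem_verts2 hin).mp hmV
    have hsup2 : ((verts (n - i) ((I.filter (fun y => i < y)).image (fun y => y - i))).filter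
        (fun u => u < v)).sup id = m :=
      le_antisymm (Finset.sup_le hmax) (Finset.le_sup (f := id) hm)
    have hsupT : ((verts n I).filter (fun u => u < v + i)).sup id = m + i := by
      apply le_antisymm
      · apply Finset.sup_le
        intro u hu
        simp only [id_eq]
        obtain ⟨huV, huv⟩ := Finset.mem_filter.mp hu
        by_cases hui : u ≤ i
        · omega
        · have humem : u - i ∈ (verts (n - i)
              ((I.filter (fun y => i < y)).image (fun y => y - i))).filter (fun u => u < v) :=
            Finset.mem_filter.mpr ⟨(mem_verts2 hin).mpr
              ⟨by omega, by rw [Nat.sub_add_cancel (by omega)]; exact huV⟩, by omega⟩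
          have := hmax _ humem
          simp only [id_eq] at this; omega
      · exact Finset.le_sup (f := id)
          (Finset.mem_filter.mpr ⟨hmmem, by omega⟩)
    rw [hsupT, hsup2]; omega
  · rw [Finset.not_nonempty_iff_eq_empty] at hS
    rw [hS]
    have hsupT : ((verts n I).filter (fun u => u < v + i)).sup id = i := by
      apply le_antisymm
      · apply Finset.sup_le
        intro u hu
        simp only [id_eq]
        obtain ⟨huV, huv⟩ := Finset.mem_filter.mp hu
        by_contra hui
        push_neg at hui
        have humem : u - i ∈ (verts (n - i)
            ((I.filter (fun y => i < y)).image (fun y => y - i))).filter (fun u => u < v) :=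
          Finset.mem_filter.mpr ⟨(mem_verts2 hin).mpr
            ⟨by omega, by rw [Nat.sub_add_cancel (by omega)]; exact huV⟩, by omega⟩
        rw [hS] at humem
        exact absurd humem (Finset.notMem_empty _)
      · exact Finset.le_sup (f := id)
          (Finset.mem_filter.mpr ⟨mem_verts_iff.mpr (Or.inr hii), by omega⟩)
    rw [hsupT]
    simp

end GenHessAux

section Main

open GenHess GenHessAux
open scoped Classical

variable {n i : ℕ} {I : Finset ℕ} {h : ℕ → ℕ} {N : ℕ}

/-- the monotonicity consequence: vertices ≤ i have h-value ≤ i -/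
lemma h_le_of_le (hgen : IsGenHess n I h) (hii : i ∈ I) (hfix : h i = i)
    {v : ℕ} (hv : v ∈ verts n I) (hvi : v ≤ i) : h v ≤ i := by
  have := hgen.2.2.2 v hv i (mem_verts_iff.mpr (Or.inr hii)) hvi
  omega

/-- edge condition translates on the right part -/
lemma edge_right (hin : i < n)
    {v u : ℕ} (hv : v ∈ verts (n - i) ((I.filter (fun y => i < y)).image (fun y => y - i)))
    (hu : u ∈ verts (n - i) ((I.filter (fun y => i < y)).image (fun y => y - i))) :
    (v < u ∧ u ≤ h (v + i) - i) ↔ (v + i < u + i ∧ u + i ≤ h (v + i)) := by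
  have h1u : 1 ≤ u := ((mem_verts2 hin).mp hu).1
  omega

lemma isProper_glue_iff (hgen : IsGenHess n I h) (hii : i ∈ I) (hin : i < n) (hfix : h i = i)
    (γ1 : {x // x ∈ verts i (I.filter (fun y => y < i))} → Finset (Fin N))
    (γ2 : {x // x ∈ verts (n - i) ((I.filter (fun y => i < y)).image (fun y => y - i))} →
      Finset (Fin N)) :
    IsProper n I h (glue hii hin γ1 γ2) ↔
      IsProper i (I.filter (fun y => y < i)) h γ1 ∧
        IsProper (n - i) ((I.filter (fun y => i < y)).image (fun y => y - i))
          (fun x => h (x + i) - i) γ2 := by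
  constructor
  · rintro ⟨hc, hd⟩
    refine ⟨⟨?_, ?_⟩, ⟨?_, ?_⟩⟩
    · intro v
      have := hc ((vequiv hii hin) (Sum.inl v))
      rw [glue_inl] at this
      rw [this, vequiv_inl_val, ← wt_left hii hin ((mem_verts1 hii hin).mp v.2).2]
    · intro v u hlt hle
      have := hd ((vequiv hii hin) (Sum.inl v)) ((vequiv hii hin) (Sum.inl u))
        (by simpa using hlt) (by simpa using hle)
      rwa [glue_inl, glue_inl] at this
    · intro v
      have := hc ((vequiv hii hin) (Sum.inr v))
      rw [glue_inr] at this
      rw [this, vequiv_inr_val, wt_right hii hin v.2]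
    · intro v u hlt hle
      have h2 := (edge_right (h := h) hin v.2 u.2).mp ⟨hlt, hle⟩
      have := hd ((vequiv hii hin) (Sum.inr v)) ((vequiv hii hin) (Sum.inr u))
        (by simpa using h2.1) (by simpa using h2.2)
      rwa [glue_inr, glue_inr] at this
  · rintro ⟨⟨hc1, hd1⟩, ⟨hc2, hd2⟩⟩
    constructor
    · intro v
      obtain ⟨s, rfl⟩ := (vequiv hii hin).surjective v
      rcases s with v | v
      · rw [glue_inl, hc1 v, vequiv_inl_val,
          ← wt_left hii hin ((mem_verts1 hii hin).mp v.2).2]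
      · rw [glue_inr, hc2 v, vequiv_inr_val, wt_right hii hin v.2]
    · intro v u hlt hle
      obtain ⟨s, rfl⟩ := (vequiv hii hin).surjective v
      obtain ⟨t, rfl⟩ := (vequiv hii hin).surjective u
      rcases s with v | v <;> rcases t with u | u
      · rw [glue_inl, glue_inl]
        exact hd1 v u (by simpa using hlt) (by simpa using hle)
      · exfalso
        have h1 : h v.1 ≤ i := h_le_of_le hgen hii hfix
          ((mem_verts1 hii hin).mp v.2).1 ((mem_verts1 hii hin).mp v.2).2
        have h2 : 1 ≤ u.1 := ((mem_verts2 hin).mp u.2).1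
        simp only [vequiv_inl_val, vequiv_inr_val] at hle
        omega
      · exfalso
        have h1 : u.1 ≤ i := ((mem_verts1 hii hin).mp u.2).2
        have h2 : 1 ≤ v.1 := ((mem_verts2 hin).mp v.2).1
        simp only [vequiv_inl_val, vequiv_inr_val] at hlt
        omega
      · rw [glue_inr, glue_inr]
        simp only [vequiv_inr_val] at hlt hle
        have h2 := (edge_right (h := h) hin v.2 u.2).mpr ⟨hlt, hle⟩
        exact hd2 v u h2.1 h2.2

lemma asc_glue (hgen : IsGenHess n I h) (hii : i ∈ I) (hin : i < n) (hfix : h i = i)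
    (γ1 : {x // x ∈ verts i (I.filter (fun y => y < i))} → Finset (Fin N))
    (γ2 : {x // x ∈ verts (n - i) ((I.filter (fun y => i < y)).image (fun y => y - i))} →
      Finset (Fin N)) :
    asc n I h (glue hii hin γ1 γ2) =
      asc i (I.filter (fun y => y < i)) h γ1 +
        asc (n - i) ((I.filter (fun y => i < y)).image (fun y => y - i))
          (fun x => h (x + i) - i) γ2 := by
  unfold asc
  rw [← Equiv.sum_comp (vequiv hii hin)
    (fun v => ∑ u : {x // x ∈ verts n I},
      if v.val < u.val ∧ u.val ≤ h v.val then
        ((glue hii hin γ1 γ2 v ×ˢ glue hii hin γ1 γ2 u).filter fun ab => ab.1 < ab.2).card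
      else 0)]
  rw [Fintype.sum_sum_type]
  congr 1
  · apply Finset.sum_congr rfl
    intro v _
    rw [← Equiv.sum_comp (vequiv hii hin)
      (fun u => if ((vequiv hii hin) (Sum.inl v)).val < u.val ∧
          u.val ≤ h ((vequiv hii hin) (Sum.inl v)).val then
        ((glue hii hin γ1 γ2 ((vequiv hii hin) (Sum.inl v)) ×ˢ glue hii hin γ1 γ2 u).filter
          fun ab => ab.1 < ab.2).card else 0)]
    rw [Fintype.sum_sum_type]
    have hzero : ∀ u, (if ((vequiv hii hin) (Sum.inl v)).val <
          ((vequiv hii hin) (Sum.inr u)).val ∧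
          ((vequiv hii hin) (Sum.inr u)).val ≤ h ((vequiv hii hin) (Sum.inl v)).val then
        ((glue hii hin γ1 γ2 ((vequiv hii hin) (Sum.inl v)) ×ˢ
          glue hii hin γ1 γ2 ((vequiv hii hin) (Sum.inr u))).filter
          fun ab => ab.1 < ab.2).card else 0) = 0 := by
      intro u
      rw [if_neg]
      simp only [vequiv_inl_val, vequiv_inr_val]
      have h1 : h v.1 ≤ i := h_le_of_le hgen hii hfix
        ((mem_verts1 hii hin).mp v.2).1 ((mem_verts1 hii hin).mp v.2).2
      have h2 : 1 ≤ u.1 := ((mem_verts2 hin).mp u.2).1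
      rintro ⟨-, hle⟩
      omega
    rw [Finset.sum_congr rfl (fun u _ => hzero u), Finset.sum_const_zero, add_zero]
    apply Finset.sum_congr rfl
    intro u _
    simp only [vequiv_inl_val, glue_inl]
  · apply Finset.sum_congr rfl
    intro v _
    rw [← Equiv.sum_comp (vequiv hii hin)
      (fun u => if ((vequiv hii hin) (Sum.inr v)).val < u.val ∧
          u.val ≤ h ((vequiv hii hin) (Sum.inr v)).val then
        ((glue hii hin γ1 γ2 ((vequiv hii hin) (Sum.inr v)) ×ˢ glue hii hin γ1 γ2 u).filter
          fun ab => ab.1 < ab.2).card else 0)]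
    rw [Fintype.sum_sum_type]
    have hzero : ∀ u, (if ((vequiv hii hin) (Sum.inr v)).val <
          ((vequiv hii hin) (Sum.inl u)).val ∧
          ((vequiv hii hin) (Sum.inl u)).val ≤ h ((vequiv hii hin) (Sum.inr v)).val then
        ((glue hii hin γ1 γ2 ((vequiv hii hin) (Sum.inr v)) ×ˢ
          glue hii hin γ1 γ2 ((vequiv hii hin) (Sum.inl u))).filter
          fun ab => ab.1 < ab.2).card else 0) = 0 := by
      intro u
      rw [if_neg]
      simp only [vequiv_inl_val, vequiv_inr_val]
      have h1 : u.1 ≤ i := ((mem_verts1 hii hin).mp u.2).2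
      have h2 : 1 ≤ v.1 := ((mem_verts2 hin).mp v.2).1
      rintro ⟨hlt, -⟩
      omega
    rw [Finset.sum_congr rfl (fun u _ => hzero u), Finset.sum_const_zero, zero_add]
    apply Finset.sum_congr rfl
    intro u _
    simp only [vequiv_inr_val, glue_inr]
    rw [if_congr (Iff.symm (edge_right (h := h) hin v.2 u.2)) rfl rfl]

lemma prod_glue (hii : i ∈ I) (hin : i < n)
    (γ1 : {x // x ∈ verts i (I.filter (fun y => y < i))} → Finset (Fin N))
    (γ2 : {x // x ∈ verts (n - i) ((I.filter (fun y => i < y)).image (fun y => y - i))} →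
      Finset (Fin N)) :
    (∏ v : {x // x ∈ verts n I}, ∏ a ∈ glue hii hin γ1 γ2 v, MvPolynomial.X (R := ℤ) a) =
      (∏ v, ∏ a ∈ γ1 v, MvPolynomial.X a) * ∏ v, ∏ a ∈ γ2 v, MvPolynomial.X a := by
  rw [← Equiv.prod_comp (vequiv hii hin)
    (fun v => ∏ a ∈ glue hii hin γ1 γ2 v, MvPolynomial.X (R := ℤ) a)]
  rw [Fintype.prod_sum_type]
  congr 1 <;> exact Finset.prod_congr rfl (fun v _ => by simp)

end Main

/-- Proposition 34 (csf form): if `h i = i` for some `i ∈ I` then `csf` factors as a product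
over the two generalized Hessenberg functions `h' ∈ H_{I',i}` and `h'' ∈ H_{I'',n-i}`. -/
theorem csf_reducible_mul (n : ℕ) (I : Finset ℕ) (h : ℕ → ℕ) (hgen : IsGenHess n I h)
    (i : ℕ) (hi : i ∈ I) (hfix : h i = i)
    (N : ℕ) (hN : 1 ≤ N) :
    csf n I h N =
      csf i (I.filter (fun x => x < i)) h N *
        csf (n - i) ((I.filter (fun x => i < x)).image (fun x => x - i))
          (fun x => h (x + i) - i) N := by
  classical
  have h1i : 1 ≤ i := (hgen.1 i hi).1
  have hin : i < n := by have := hgen.1 i hi; omega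
  unfold csf
  rw [Finset.sum_mul_sum, ← Finset.sum_product']
  refine Finset.sum_nbij'
    (fun γ => (GenHessAux.res1 hi hin γ, GenHessAux.res2 hi hin γ))
    (fun p => GenHessAux.glue hi hin p.1 p.2) ?_ ?_ ?_ ?_ ?_
  · intro γ hγ
    rw [Finset.mem_filter] at hγ
    rw [Finset.mem_product, Finset.mem_filter, Finset.mem_filter]
    have hγ2 := hγ.2
    rw [← GenHessAux.glue_res hi hin γ] at hγ2
    have hp := (isProper_glue_iff hgen hi hin hfix _ _).mp hγ2
    exact ⟨⟨Finset.mem_univ _, hp.1⟩, Finset.mem_univ _, hp.2⟩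
  · intro p hp
    rw [Finset.mem_product, Finset.mem_filter, Finset.mem_filter] at hp
    rw [Finset.mem_filter]
    exact ⟨Finset.mem_univ _, (isProper_glue_iff hgen hi hin hfix _ _).mpr ⟨hp.1.2, hp.2.2⟩⟩
  · intro γ _
    exact GenHessAux.glue_res hi hin γ
  · intro p _
    exact Prod.ext (GenHessAux.res1_glue hi hin _ _) (GenHessAux.res2_glue hi hin _ _)
  · intro γ hγ
    conv_lhs => rw [← GenHessAux.glue_res hi hin γ]
    rw [prod_glue hi hin, asc_glue hgen hi hin hfix, map_mul, pow_add]
    ring
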